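/- Let G be an abelian group and let A and B be finite subsets of G with |A| = |B|. If for every element b ∈ B the set A contains no coset of the cyclic subgroup generated by b, then there exists a matching from A to B. -/

import Mathlib

/-- A matching from a finite subset `A` to a finite subset `B` of an additive abelian
group `G` is a bijection `f : A → B` such that `a + f a ∉ A` for all `a ∈ A`. -/
def IsAddMatching {G : Type*} [AddCommGroup G] (A B : Finset G) (f : ↥A ≃ ↥B) : Prop :=
  ∀ a : ↥A, (a : G) + (f a : G) ∉ A

open Finset in
/-- Key combinatorial lemma, proved by an e-transform induction on `S.card`:
if `T ⊆ A`, `T + S ⊆ A` and `|T| + |S| > |A|`, then `A` contains a coset of the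
cyclic subgroup generated by some element of `S`. -/
lemma key_aux {G : Type*} [AddCommGroup G] [DecidableEq G] (A : Finset G) :
    ∀ n (S T : Finset G), S.card ≤ n → S.Nonempty → T.Nonempty → T ⊆ A →
      (∀ x ∈ T, ∀ y ∈ S, x + y ∈ A) → A.card < T.card + S.card →
      ∃ b ∈ S, ∃ x : G, ∀ k : ℤ, x + k • b ∈ A := by
  intro n
  induction n with
  | zero =>
    intro S T hS hSne _ _ _ _
    rw [Nat.le_zero, card_eq_zero] at hS
    exact absurd hS (Finset.nonempty_iff_ne_empty.1 hSne)
  | succ n ih =>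
    intro S T hSn hSne hTne hTA hsum hcard
    by_cases hcase1 : ∃ e ∈ T, ∀ s ∈ S, e + s ∉ T
    · -- then `T` and `e + S` are disjoint subsets of `A`, contradicting the cardinality bound
      exfalso
      obtain ⟨e, he, hall⟩ := hcase1
      have hUA : S.image (e + ·) ⊆ A := by
        intro x hx
        obtain ⟨s, hs, rfl⟩ := Finset.mem_image.1 hx
        exact hsum e he s hs
      have hdisj : Disjoint T (S.image (e + ·)) := by
        rw [Finset.disjoint_right]
        intro x hx hxT
        obtain ⟨s, hs, rfl⟩ := Finset.mem_image.1 hx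
        exact hall s hs hxT
      have hsub : T ∪ S.image (e + ·) ⊆ A := Finset.union_subset hTA hUA
      have hcardU : (T ∪ S.image (e + ·)).card = T.card + S.card := by
        rw [Finset.card_union_of_disjoint hdisj,
          Finset.card_image_of_injective _ (add_right_injective e)]
      have := Finset.card_le_card hsub
      omega
    · by_cases hcase2 : ∃ e ∈ T, ∃ s ∈ S, e + s ∉ T
      · -- e-transform: replace (T, S) by (T ∪ (e + S), {s ∈ S : e + s ∈ T})
        obtain ⟨e, he, s₂, hs₂, hs₂T⟩ := hcase2
        push_neg at hcase1
        obtain ⟨s₁, hs₁, hs₁T⟩ := hcase1 e he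
        set S' : Finset G := S.filter (fun s => e + s ∈ T) with hS'
        set T' : Finset G := T ∪ S.image (e + ·) with hT'
        have hS'sub : S' ⊆ S := Finset.filter_subset _ _
        have hS'ne : S'.Nonempty := ⟨s₁, Finset.mem_filter.2 ⟨hs₁, hs₁T⟩⟩
        have hS'lt : S'.card < S.card := by
          apply Finset.card_lt_card
          refine ⟨hS'sub, fun h => ?_⟩
          have := Finset.mem_filter.1 (h hs₂)
          exact hs₂T this.2
        have hT'A : T' ⊆ A := by
          apply Finset.union_subset hTA
          intro x hx
          obtain ⟨s, hs, rfl⟩ := Finset.mem_image.1 hx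
          exact hsum e he s hs
        have hsum' : ∀ x ∈ T', ∀ y ∈ S', x + y ∈ A := by
          intro x hx y hy
          obtain ⟨hyS, hyT⟩ := Finset.mem_filter.1 hy
          rcases Finset.mem_union.1 hx with hxT | hxI
          · exact hsum x hxT y hyS
          · obtain ⟨s, hs, rfl⟩ := Finset.mem_image.1 hxI
            have : (e + y) + s ∈ A := hsum _ hyT s hs
            convert this using 1
            abel
        have hcard' : A.card < T'.card + S'.card := by
          have hsubimg : (S \ S').image (e + ·) ⊆ T' \ T := by
            intro x hx
            obtain ⟨s, hs, rfl⟩ := Finset.mem_image.1 hx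
            obtain ⟨hsS, hsS'⟩ := Finset.mem_sdiff.1 hs
            have hst : e + s ∉ T := fun h => hsS' (Finset.mem_filter.2 ⟨hsS, h⟩)
            exact Finset.mem_sdiff.2 ⟨Finset.mem_union_right _
              (Finset.mem_image.2 ⟨s, hsS, rfl⟩), hst⟩
          have h1 : (S \ S').card ≤ (T' \ T).card := by
            calc (S \ S').card = ((S \ S').image (e + ·)).card :=
                  (Finset.card_image_of_injective _ (add_right_injective e)).symm
              _ ≤ (T' \ T).card := Finset.card_le_card hsubimg
          have h2 : (S \ S').card = S.card - S'.card := Finset.card_sdiff_of_subset hS'sub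
          have h3 : T ⊆ T' := Finset.subset_union_left
          have h4 : T'.card = T.card + (T' \ T).card := by
            rw [← Finset.card_union_of_disjoint (Finset.disjoint_sdiff),
              Finset.union_sdiff_of_subset h3]
          have h5 : S'.card ≤ S.card := Finset.card_le_card hS'sub
          omega
        obtain ⟨b, hb, x, hx⟩ := ih S' T' (by omega) hS'ne
          (hTne.mono (Finset.subset_union_left)) hT'A hsum' hcard'
        exact ⟨b, hS'sub hb, x, hx⟩
      · -- stable case: T + S ⊆ T, so T + b = T for b ∈ S, giving a full coset inside T
        push_neg at hcase2
        obtain ⟨b, hb⟩ := hSne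
        obtain ⟨t, ht⟩ := hTne
        have himg : T.image (· + b) = T := by
          apply Finset.eq_of_subset_of_card_le
          · intro x hx
            obtain ⟨y, hy, rfl⟩ := Finset.mem_image.1 hx
            exact hcase2 y hy b hb
          · rw [Finset.card_image_of_injective _ (add_left_injective b)]
        have hfwd : ∀ x ∈ T, x + b ∈ T := by
          intro x hx
          exact hcase2 x hx b hb
        have hbwd : ∀ x ∈ T, x - b ∈ T := by
          intro x hx
          rw [← himg] at hx
          obtain ⟨y, hy, rfl⟩ := Finset.mem_image.1 hx
          simpa using hy
        refine ⟨b, hb, t, fun k => ?_⟩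
        have : t + k • b ∈ T := by
          induction k using Int.induction_on with
          | zero => simpa using ht
          | succ i hi =>
            have := hfwd _ hi
            convert this using 1
            rw [add_zsmul, one_zsmul]
            abel
          | pred i hi =>
            have := hbwd _ hi
            convert this using 1
            rw [sub_zsmul, one_zsmul]
            abel
        exact hTA this

/-- Let `G` be an abelian group and `A`, `B` finite subsets of `G` with the same
cardinality. If for every `b ∈ B` the set `A` contains no coset of the cyclic subgroup
generated by `b`, then there is a matching from `A` to `B`. -/
theorem stmt1 {G : Type*} [AddCommGroup G] (A B : Finset G) (hcard : A.card = B.card)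
    (hA : ∀ b ∈ B, ∀ x : G,
      ¬ ((x + ·) '' (AddSubgroup.zmultiples b : Set G) ⊆ (A : Set G))) :
    ∃ f : ↥A ≃ ↥B, IsAddMatching A B f := by
  classical
  -- the bipartite "compatibility" sets
  set t : ↥A → Finset G := fun a => B.filter (fun b => (a : G) + b ∉ A) with ht
  -- Hall's condition
  have hall : ∀ s : Finset ↥A, s.card ≤ (s.biUnion t).card := by
    intro s
    by_contra hcon
    push_neg at hcon
    set N : Finset G := s.biUnion t with hN
    have hNB : N ⊆ B := by
      intro b hbN
      obtain ⟨a, _, hb⟩ := Finset.mem_biUnion.1 hbN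
      exact (Finset.mem_filter.1 hb).1
    set S : Finset G := B \ N with hS
    set T : Finset G := s.image Subtype.val with hT
    have hTcard : T.card = s.card := by
      rw [hT]; exact Finset.card_image_of_injective s Subtype.val_injective
    have hsne : s.Nonempty := by
      rw [← Finset.card_pos]
      omega
    have hTne : T.Nonempty := by rw [hT]; exact hsne.image Subtype.val
    have hTA : T ⊆ A := by
      intro x hx
      obtain ⟨a, _, rfl⟩ := Finset.mem_image.1 hx
      exact a.2
    have hScard : S.card = B.card - N.card := Finset.card_sdiff_of_subset hNB
    have hNb : N.card < s.card := hcon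
    have hsA : s.card ≤ A.card := by
      have := Finset.card_le_card hTA
      omega
    have hSne : S.Nonempty := by
      rw [← Finset.card_pos]
      omega
    have hsum : ∀ x ∈ T, ∀ y ∈ S, x + y ∈ A := by
      intro x hx y hy
      obtain ⟨a, ha, rfl⟩ := Finset.mem_image.1 hx
      obtain ⟨hyB, hyN⟩ := Finset.mem_sdiff.1 hy
      by_contra hxy
      exact hyN (Finset.mem_biUnion.2 ⟨a, ha, Finset.mem_filter.2 ⟨hyB, hxy⟩⟩)
    have hbig : A.card < T.card + S.card := by
      have hNcard : N.card ≤ B.card := Finset.card_le_card hNB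
      omega
    obtain ⟨b, hbS, x, hx⟩ := key_aux A S.card S T le_rfl hSne hTne hTA hsum hbig
    have hbB : b ∈ B := (Finset.mem_sdiff.1 hbS).1
    apply hA b hbB x
    intro y hy
    obtain ⟨g, hg, rfl⟩ := hy
    obtain ⟨k, hk⟩ := AddSubgroup.mem_zmultiples_iff.1 hg
    simpa [← hk] using hx k
  obtain ⟨f, hfinj, hft⟩ := (Finset.all_card_le_biUnion_card_iff_exists_injective t).1 hall
  have hfB : ∀ a : ↥A, f a ∈ B := fun a => (Finset.mem_filter.1 (hft a)).1
  set g : ↥A → ↥B := fun a => ⟨f a, hfB a⟩ with hg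
  have hginj : Function.Injective g := fun a a' h => hfinj (congrArg Subtype.val h)
  have hcards : Fintype.card ↥A = Fintype.card ↥B := by
    simp only [Fintype.card_coe]
    exact hcard
  have hgbij : Function.Bijective g :=
    (Fintype.bijective_iff_injective_and_card g).2 ⟨hginj, hcards⟩
  refine ⟨Equiv.ofBijective g hgbij, fun a => ?_⟩
  exact (Finset.mem_filter.1 (hft a)).2
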